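/- Let G be a group generated by a conjugacy class D of 3-transpositions. Then for every d ∈ D, the only element of D in the coset d·Z(G) is d itself, and the second center of G equals the center: Z₂(G) = Z(G). -/

import Mathlib

/-! Prelude: 3-transposition groups. -/

section ThreeTranspositions

variable {G : Type*} [Group G]

/-- `D` is a conjugacy class of the group `G`. -/
def IsConjClass (D : Set G) : Prop := ∃ d : G, D = {x | IsConj d x}

/-- `D` is a normal set of involutions such that the product of any two of its
elements has order 1, 2 or 3; i.e. `D` is a set of 3-transpositions. -/
structure IsSetOf3Transpositions (D : Set G) : Prop where
  normal : ∀ d ∈ D, ∀ g : G, g * d * g⁻¹ ∈ D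
  involution : ∀ d ∈ D, orderOf d = 2
  orders : ∀ s ∈ D, ∀ t ∈ D, orderOf (s * t) ∈ ({1, 2, 3} : Set ℕ)

/-- `D` is of symplectic type: whenever `e, f ∈ D` generate a subgroup isomorphic
to `Sym(3)`, every `d ∈ D` commutes with at least one of `e`, `f`, `efe`. -/
def IsSymplecticType (D : Set G) : Prop :=
  ∀ d ∈ D, ∀ e ∈ D, ∀ f ∈ D,
    Nonempty (↥(Subgroup.closure ({e, f} : Set G)) ≃* Equiv.Perm (Fin 3)) →
      Commute d e ∨ Commute d f ∨ Commute d (e * f * e)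

/-- `H` is isomorphic to a central quotient `W/Z` (`Z ≤ Z(W)`) of the group `W`. -/
def IsCentralQuotientOf (W : Type*) [Group W] (H : Type*) [Group H] : Prop :=
  ∃ φ : W →* H, Function.Surjective φ ∧ φ.ker ≤ Subgroup.center W

end ThreeTranspositions

theorem statement_10 {G : Type*} [Group G] (D : Set G)
    (hclass : IsConjClass D)
    (h3t : IsSetOf3Transpositions D)
    (hgen : Subgroup.closure D = ⊤) :
    (∀ d ∈ D, ∀ z ∈ Subgroup.center G, d * z ∈ D → d * z = d) ∧
    upperCentralSeries G 2 = Subgroup.center G := by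
  have hinv : ∀ d ∈ D, d * d = 1 := by
    intro d hd
    have h := pow_orderOf_eq_one d
    rw [h3t.involution d hd, pow_two] at h
    exact h
  have key : ∀ d ∈ D, ∀ z ∈ Subgroup.center G, d * z ∈ D → d * z = d := by
    intro d hd z hz hdz
    by_cases hz1 : z = 1
    · simp [hz1]
    exfalso
    have hzc : ∀ x : G, Commute x z := fun x => Subgroup.mem_center_iff.mp hz x
    have hz2 : z * z = 1 := by
      have h := hinv _ hdz
      have hcd : z * d = d * z := ((hzc d).eq).symm
      have heq : d * z * (d * z) = z * z := by
        calc d * z * (d * z) = d * (z * d) * z := by group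
          _ = d * (d * z) * z := by rw [hcd]
          _ = (d * d) * (z * z) := by group
          _ = z * z := by rw [hinv d hd, one_mul]
      rw [heq] at h
      exact h
    by_cases hc : d ∈ Subgroup.center G
    · obtain ⟨d₀, hD⟩ := hclass
      have h1 : IsConj d₀ d := by rw [hD] at hd; exact hd
      have h2 : IsConj d₀ (d * z) := by rw [hD] at hdz; exact hdz
      obtain ⟨c, hceq⟩ := isConj_iff.mp (h1.symm.trans h2)
      have hcd : c * d = d * c := Subgroup.mem_center_iff.mp hc c
      have hfix : c * d * c⁻¹ = d := by rw [hcd]; group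
      rw [hfix] at hceq
      apply hz1
      calc z = d⁻¹ * (d * z) := by group
        _ = d⁻¹ * d := by rw [← hceq]
        _ = 1 := by group
    · obtain ⟨e, he, hne⟩ : ∃ e ∈ D, ¬ Commute e d := by
        by_contra h
        push_neg at h
        apply hc
        have hle : Subgroup.closure D ≤ Subgroup.centralizer {d} := by
          rw [Subgroup.closure_le]
          intro e he
          refine Subgroup.mem_centralizer_iff.mpr fun x hx => ?_
          rw [Set.mem_singleton_iff] at hx
          subst hx
          exact ((h e he).eq).symm
        rw [hgen] at hle
        rw [Subgroup.mem_center_iff]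
        intro g
        exact (Subgroup.mem_centralizer_iff.mp (hle (Subgroup.mem_top g)) d rfl).symm
      have hdi : d⁻¹ = d := inv_eq_of_mul_eq_one_right (hinv d hd)
      have hei : e⁻¹ = e := inv_eq_of_mul_eq_one_right (hinv e he)
      set a := e * d with ha
      have horda : orderOf a = 3 := by
        have h := h3t.orders e he d hd
        simp only [Set.mem_insert_iff, Set.mem_singleton_iff] at h
        rcases h with h1 | h2 | h3
        · exfalso
          apply hne
          have h0 : e * d = 1 := orderOf_eq_one_iff.mp h1
          have hed : d = e := by
            calc d = e * (e * d) := by rw [← mul_assoc, hinv e he, one_mul]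
              _ = e := by rw [h0, mul_one]
          rw [hed]
        · exfalso
          apply hne
          have h4 : (e * d) * (e * d) = 1 := by
            have := pow_orderOf_eq_one (e * d)
            rw [h2, pow_two] at this
            exact this
          have h5 : e * d = (e * d)⁻¹ := (inv_eq_of_mul_eq_one_right h4).symm
          rw [mul_inv_rev, hdi, hei] at h5
          exact h5
        · exact h3
      have ha3 : a ^ 3 = 1 := by rw [← horda]; exact pow_orderOf_eq_one _
      have ha2 : a ^ 2 ≠ 1 := by
        intro h
        have h6 := orderOf_dvd_of_pow_eq_one h
        rw [horda] at h6
        norm_num at h6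
      have haz : e * (d * z) = a * z := by rw [ha]; group
      have hpow : ∀ n : ℕ, (a * z) ^ n = a ^ n * z ^ n := fun n => (hzc a).mul_pow n
      have h := h3t.orders e he (d * z) hdz
      rw [haz] at h
      simp only [Set.mem_insert_iff, Set.mem_singleton_iff] at h
      rcases h with h1 | h2 | h3
      · apply ha2
        have h4 : a * z = 1 := orderOf_eq_one_iff.mp h1
        have hza : a = z⁻¹ :=
          calc a = a * z * z⁻¹ := by group
            _ = z⁻¹ := by rw [h4, one_mul]
        rw [hza, pow_two, ← mul_inv_rev, hz2]
        simp
      · apply ha2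
        have h4 : (a * z) ^ 2 = 1 := by rw [← h2]; exact pow_orderOf_eq_one _
        rw [hpow, show z ^ 2 = 1 by rw [pow_two]; exact hz2, mul_one] at h4
        exact h4
      · apply hz1
        have h4 : (a * z) ^ 3 = 1 := by rw [← h3]; exact pow_orderOf_eq_one _
        rw [hpow, ha3, one_mul] at h4
        calc z = z ^ 3 * (z * z)⁻¹ := by group
          _ = 1 := by rw [h4, hz2]; group
  refine ⟨key, le_antisymm ?_ ?_⟩
  · intro g hg
    replace hg := (Subgroup.mem_upperCentralSeries_succ_iff (n := 1)).mp hg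
    have hcom : ∀ d ∈ D, g * d = d * g := by
      intro d hd
      have hz : g * d * g⁻¹ * d⁻¹ ∈ Subgroup.center G := by
        have := hg d
        rwa [upperCentralSeries_one] at this
      set c := g * d * g⁻¹ * d⁻¹ with hcdef
      have hcd : c * d = d * c := (Subgroup.mem_center_iff.mp hz d).symm
      have hdc : d * c ∈ D := by
        have hmem := h3t.normal d hd g
        have heq : g * d * g⁻¹ = d * c := by rw [← hcd, hcdef]; group
        rwa [heq] at hmem
      have hk := key d hd c hz hdc
      have hc1 : c = 1 := by
        calc c = d⁻¹ * (d * c) := by group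
          _ = d⁻¹ * d := by rw [hk]
          _ = 1 := by group
      have hone : g * d * g⁻¹ * d⁻¹ = 1 := hc1
      calc g * d = (g * d * g⁻¹ * d⁻¹) * (d * g) := by group
        _ = d * g := by rw [hone, one_mul]
    rw [Subgroup.mem_center_iff]
    intro h
    have hle : Subgroup.closure D ≤ Subgroup.centralizer {g} := by
      rw [Subgroup.closure_le]
      intro d hd
      refine Subgroup.mem_centralizer_iff.mpr fun x hx => ?_
      rw [Set.mem_singleton_iff] at hx
      subst hx
      exact hcom d hd
    rw [hgen] at hle
    exact (Subgroup.mem_centralizer_iff.mp (hle (Subgroup.mem_top h)) g rfl).symm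
  · rw [← upperCentralSeries_one]
    exact upperCentralSeries_mono G (by norm_num)
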